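/- Under the stated context, the rational integers (α + β)² and α·β are coprime; moreover α/β is not a unit, i.e., there is no u ∈ ℂ with both u and u⁻¹ algebraic integers such that α = u·β. -/

import Mathlib

open Polynomial IntermediateField

noncomputable def sqrtneg (c : ℕ) : ℂ := Complex.I * Real.sqrt c

lemma sqrtneg_sq (c : ℕ) : sqrtneg c ^ 2 = -(c : ℂ) := by
  have h : ((Real.sqrt c : ℝ) : ℂ) ^ 2 = (c : ℂ) := by
    rw [← Complex.ofReal_pow, Real.sq_sqrt (by positivity)]
    norm_num
  simp [sqrtneg, mul_pow, Complex.I_sq, h]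

lemma sqrtneg_isIntegral (c : ℕ) : IsIntegral ℚ (sqrtneg c) := by
  refine ⟨X ^ 2 + C (c : ℚ), monic_X_pow_add_C _ two_ne_zero, ?_⟩
  simp [eval₂_add, eval₂_pow, sqrtneg_sq c]

/-- The field `K = ℚ(√-c)`, realised as the subfield of `ℂ` generated by `i·√c`. -/
noncomputable def Kf (c : ℕ) : IntermediateField ℚ ℂ := ℚ⟮sqrtneg c⟯

-- my aux lemmas
lemma Kf_mem {c : ℕ} {z : ℂ} (hz : z ∈ Kf c) :
    ∃ a b : ℚ, z = (a:ℂ) + (b:ℂ) * sqrtneg c := by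
  let S : Subalgebra ℚ ℂ :=
  { carrier := {w | ∃ a b : ℚ, w = (a:ℂ) + (b:ℂ) * sqrtneg c}
    mul_mem' := by
      rintro w₁ w₂ ⟨a₁, b₁, rfl⟩ ⟨a₂, b₂, rfl⟩
      exact ⟨a₁*a₂ - b₁*b₂*c, a₁*b₂ + a₂*b₁, by
        push_cast
        linear_combination ((b₁:ℂ)*(b₂:ℂ)) * sqrtneg_sq c⟩
    add_mem' := by
      rintro w₁ w₂ ⟨a₁, b₁, rfl⟩ ⟨a₂, b₂, rfl⟩
      exact ⟨a₁+a₂, b₁+b₂, by push_cast; ring⟩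
    algebraMap_mem' := fun r => ⟨r, 0, by simp⟩ }
  have h1 : (Kf c).toSubalgebra = Algebra.adjoin ℚ {sqrtneg c} :=
    IntermediateField.adjoin_simple_toSubalgebra_of_isAlgebraic (sqrtneg_isIntegral c).isAlgebraic
  have h2 : Algebra.adjoin ℚ {sqrtneg c} ≤ S :=
    Algebra.adjoin_le (by
      rintro w hw
      rw [Set.mem_singleton_iff] at hw
      subst hw
      exact ⟨0, 1, by simp⟩)
  have hz' : z ∈ (Kf c).toSubalgebra := hz
  rw [h1] at hz'
  exact h2 hz'

lemma rat_coe_int_of_integral {q : ℚ} (h : IsIntegral ℤ ((q:ℂ))) : ∃ z : ℤ, (z:ℚ) = q := by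
  have h2 : IsIntegral ℤ q := by
    have hinj : Function.Injective ((algebraMap ℚ ℂ).toIntAlgHom) := by
      simpa [RingHom.toIntAlgHom_coe] using (algebraMap ℚ ℂ).injective
    exact (isIntegral_algHom_iff ((algebraMap ℚ ℂ).toIntAlgHom) hinj).mp (by
      simpa [RingHom.toIntAlgHom_apply] using h)
  exact IsIntegrallyClosed.isIntegral_iff.mp h2

def Tseq (s n : ℤ) : ℕ → ℤ
  | 0 => 2
  | 1 => s
  | (j+2) => s * Tseq s n (j+1) - n * Tseq s n j

lemma Tseq_cast (s n : ℤ) (δ : ℂ) (hs : (s:ℂ) = δ + (starRingEnd ℂ) δ)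
    (hn : (n:ℂ) = δ * (starRingEnd ℂ) δ) :
    ∀ j, ((Tseq s n j : ℤ) : ℂ) = δ^j + ((starRingEnd ℂ) δ)^j
  | 0 => by norm_num [Tseq]
  | 1 => by simpa [Tseq] using hs
  | (j+2) => by
    have h1 := Tseq_cast s n δ hs hn (j+1)
    have h2 := Tseq_cast s n δ hs hn j
    simp only [Tseq]
    push_cast
    rw [h1, h2, hs, hn]
    ring

lemma Tseq_mod (s n : ℤ) : ∀ j, n ∣ Tseq s n (j+1) - s^(j+1)
  | 0 => by simp [Tseq]
  | (j+1) => by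
    have ih := Tseq_mod s n j
    have h : Tseq s n (j+2) - s^(j+2)
        = s * (Tseq s n (j+1) - s^(j+1)) - n * Tseq s n j := by
      simp only [Tseq]; ring
    rw [h]
    exact dvd_sub (ih.mul_left s) (dvd_mul_right n _)

/-- The class number of `ℚ(√-c)`. -/
noncomputable def classNumberK (c : ℕ) : ℕ :=
  haveI : FiniteDimensional ℚ (Kf c) :=
    IntermediateField.adjoin.finiteDimensional (sqrtneg_isIntegral c)
  haveI : NumberField (Kf c) := ⟨⟩
  NumberField.classNumber (Kf c)

set_option maxHeartbeats 4000000 in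
theorem stmt8 (C₁ C₂ c d : ℕ) (hC₁pos : 0 < C₁) (hC₁sqf : Squarefree C₁)
    (hC₂pos : 0 < C₂) (hcop : Nat.gcd C₁ C₂ = 1) (hmod8 : C₁ * C₂ % 8 ≠ 7)
    (hcpos : 0 < c) (hdpos : 0 < d) (hcsqf : Squarefree c)
    (hfact : C₁ * C₂ = c * d ^ 2)
    (p : ℕ) (hp : p.Prime) (hpodd : Odd p)
    (hpcl : ¬ p ∣ classNumberK c)
    (hp3 : p = 3 → ¬ ∃ m : ℤ, (C₁ : ℤ) * (C₂ : ℤ) = 3 * m ^ 2)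
    (x y : ℕ) (hxpos : 0 < x) (hypos : 0 < y)
    (heq : C₁ * x ^ 2 + C₂ = y ^ p)
    (hgcd : Nat.gcd (Nat.gcd (C₁ * x ^ 2) C₂) (y ^ p) = 1)
    (δ : ℂ) (hδK : δ ∈ Kf c) (hδint : IsIntegral ℤ δ)
    (hδeq : (C₁ : ℂ) ^ ((p - 1) / 2) * ((C₁ : ℂ) * (x : ℂ) + (d : ℂ) * sqrtneg c) = δ ^ p)
    (α β : ℂ) (hα : α = δ / (Real.sqrt C₁ : ℂ))
    (hβ : β = (starRingEnd ℂ) δ / (Real.sqrt C₁ : ℂ))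
    :
    (∃ m k : ℤ, (α + β) ^ 2 = (m : ℂ) ∧ α * β = (k : ℂ) ∧ IsCoprime m k) ∧
    ¬ ∃ u : ℂ, IsIntegral ℤ u ∧ IsIntegral ℤ u⁻¹ ∧ α = u * β := by
  -- basic numerals
  obtain ⟨k, hk⟩ := hpodd
  have hp2 : 2 ≤ p := hp.two_le
  have hp3' : 3 ≤ p := by omega
  have hk2 : (p - 1) / 2 = k := by omega
  rw [hk2] at hδeq
  have hC₁ℂ : (C₁ : ℂ) ≠ 0 := Nat.cast_ne_zero.mpr hC₁pos.ne'
  have hcR : (0:ℝ) < (c:ℝ) := by exact_mod_cast hcpos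
  have hsqc : (0:ℝ) < Real.sqrt c := Real.sqrt_pos.mpr hcR
  have hrpos : (0:ℝ) < Real.sqrt C₁ := Real.sqrt_pos.mpr (by exact_mod_cast hC₁pos)
  have hrne : ((Real.sqrt C₁ : ℝ) : ℂ) ≠ 0 := by exact_mod_cast hrpos.ne'
  have hr2 : ((Real.sqrt C₁ : ℝ) : ℂ)^2 = (C₁ : ℂ) := by
    rw [← Complex.ofReal_pow, Real.sq_sqrt (by positivity)]
    norm_num
  have hconj_sc : (starRingEnd ℂ) (sqrtneg c) = - sqrtneg c := by
    simp [sqrtneg]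
  -- representation of δ
  obtain ⟨a, b, hab⟩ := Kf_mem hδK
  have hconjδ : (starRingEnd ℂ) δ = (a:ℂ) - (b:ℂ) * sqrtneg c := by
    rw [hab]
    simp [map_add, map_mul, hconj_sc]
    ring
  -- trace and norm are integers
  have hconj_int : IsIntegral ℤ ((starRingEnd ℂ) δ) := map_isIntegral_int (starRingEnd ℂ) hδint
  have htr : δ + (starRingEnd ℂ) δ = (((2*a : ℚ)):ℂ) := by
    rw [hconjδ, hab]; push_cast; ring
  have hnm : δ * (starRingEnd ℂ) δ = (((a^2 + c*b^2 : ℚ)):ℂ) := by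
    rw [hconjδ, hab]
    push_cast
    linear_combination (-(b:ℂ)^2) * sqrtneg_sq c
  obtain ⟨s, hsval⟩ := rat_coe_int_of_integral (q := 2*a) (htr ▸ (hδint.add hconj_int))
  obtain ⟨n, hnval⟩ := rat_coe_int_of_integral (q := a^2 + c*b^2) (hnm ▸ (hδint.mul hconj_int))
  have hs : (s:ℂ) = δ + (starRingEnd ℂ) δ := by
    rw [htr, ← hsval]; push_cast; ring
  have hn : (n:ℂ) = δ * (starRingEnd ℂ) δ := by
    rw [hnm, ← hnval]; push_cast; ring
  -- conjugate equation
  have hδeq' : (C₁ : ℂ) ^ k * ((C₁ : ℂ) * (x : ℂ) - (d : ℂ) * sqrtneg c)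
      = ((starRingEnd ℂ) δ) ^ p := by
    have h := congrArg (starRingEnd ℂ) hδeq
    simp only [map_mul, map_add, map_pow, map_natCast, hconj_sc] at h
    linear_combination h
  -- norm value: n = C₁ * y
  have heqC : (C₁:ℂ) * (x:ℂ)^2 + (C₂:ℂ) = (y:ℂ)^p := by exact_mod_cast congrArg (Nat.cast : ℕ → ℂ) heq
  have hfactC : (c:ℂ) * (d:ℂ)^2 = (C₁:ℂ) * (C₂:ℂ) := by exact_mod_cast (congrArg (Nat.cast : ℕ → ℂ) hfact).symm
  have hnpow : (n:ℂ)^p = (((C₁ * y : ℕ):ℤ):ℂ)^p := by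
    rw [hn, mul_pow, ← hδeq, ← hδeq']
    rw [hk] at heqC ⊢
    push_cast
    linear_combination (-(C₁:ℂ)^(2*k)*(d:ℂ)^2) * sqrtneg_sq c
      + ((C₁:ℂ)^(2*k)) * hfactC + ((C₁:ℂ)^(2*k+1)) * heqC
  have hn_eq : n = ((C₁ * y : ℕ):ℤ) := by
    have : n ^ p = ((C₁ * y : ℕ):ℤ) ^ p := by
      exact_mod_cast hnpow
    exact (Odd.strictMono_pow (R := ℤ) ⟨k, by omega⟩).injective this
  -- product of alpha and beta
  have hδconjδ : δ * (starRingEnd ℂ) δ = (C₁:ℂ) * (y:ℂ) := by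
    rw [← hn, hn_eq]; push_cast; ring
  have hprod : α * β = (((y:ℤ)):ℂ) := by
    rw [hα, hβ, div_mul_div_comm, ← sq, hr2, hδconjδ]
    push_cast
    rw [mul_comm, mul_div_assoc, div_self hC₁ℂ, mul_one]
  -- T sequence facts
  have hTp : ((Tseq s n p : ℤ) : ℂ) = δ^p + ((starRingEnd ℂ) δ)^p := Tseq_cast s n δ hs hn p
  have hTpval : Tseq s n p = 2 * (C₁:ℤ)^(k+1) * x := by
    have : ((Tseq s n p : ℤ) : ℂ) = ((2 * (C₁:ℤ)^(k+1) * x : ℤ) : ℂ) := by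
      rw [hTp]
      push_cast
      linear_combination -hδeq - hδeq'
    exact_mod_cast this
  have hTmodp : n ∣ Tseq s n p - s^p := by
    have h := Tseq_mod s n (p-1)
    rwa [show p - 1 + 1 = p by omega] at h
  have hC₁n : (C₁:ℤ) ∣ n := by rw [hn_eq]; push_cast; exact dvd_mul_right _ _
  -- C₁ divides s
  have hC₁s : (C₁:ℤ) ∣ s := by
    have h1 : (C₁:ℤ) ∣ s^p := by
      have h2 : (C₁:ℤ) ∣ Tseq s n p := by
        rw [hTpval]
        exact ⟨2 * (C₁:ℤ)^k * (x:ℤ), by ring⟩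
      have h3 : (C₁:ℤ) ∣ Tseq s n p - s^p := hC₁n.trans hTmodp
      have h4 := dvd_sub h2 h3
      rwa [sub_sub_cancel] at h4
    exact ((Int.squarefree_natCast.mpr hC₁sqf).dvd_pow_iff_dvd (by omega)).mp h1
  obtain ⟨e, he⟩ := hC₁s
  -- the two integers
  have hsumsq : (α + β)^2 = (((C₁:ℤ) * e^2 : ℤ):ℂ) := by
    rw [hα, hβ, ← add_div, div_pow, hr2, ← hs, he]
    push_cast
    field_simp
  -- coprimality
  have hcoprime : IsCoprime ((C₁:ℤ) * e^2) ((y:ℤ)) := by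
    rw [Int.isCoprime_iff_gcd_eq_one]
    by_contra hne
    have hgcd0 : Int.gcd ((C₁:ℤ) * e^2) ((y:ℤ)) ≠ 0 := by
      intro h0
      rw [Int.gcd_eq_zero_iff] at h0
      exact_mod_cast hypos.ne' (by exact_mod_cast h0.2)
    obtain ⟨q, hq, hqdvd⟩ := Nat.exists_prime_and_dvd hne
    have hqI : Prime (q:ℤ) := (Nat.prime_iff_prime_int.mp hq)
    have hqm : (q:ℤ) ∣ (C₁:ℤ) * e^2 := (Int.natCast_dvd_natCast.mpr hqdvd).trans (Int.gcd_dvd_left _ _)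
    have hqyZ : (q:ℤ) ∣ (y:ℤ) := (Int.natCast_dvd_natCast.mpr hqdvd).trans (Int.gcd_dvd_right _ _)
    have hqy : q ∣ y := Int.natCast_dvd_natCast.mp hqyZ
    -- q divides s
    have hqs : (q:ℤ) ∣ s := by
      have : (q:ℤ) ∣ s^2 := by
        have : s^2 = (C₁:ℤ) * ((C₁:ℤ) * e^2) := by rw [he]; ring
        rw [this]
        exact hqm.mul_left _
      exact hqI.dvd_of_dvd_pow this
    -- q divides 2 * C₁^(k+1) * x
    have hqT : (q:ℤ) ∣ 2 * (C₁:ℤ)^(k+1) * (x:ℤ) := by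
      have hqn : (q:ℤ) ∣ n := by
        rw [hn_eq]; push_cast; exact Dvd.dvd.mul_left hqyZ _
      have h1 : (q:ℤ) ∣ Tseq s n p - s^p := hqn.trans hTmodp
      have h2 : (q:ℤ) ∣ s^p := dvd_pow hqs (by omega)
      have h3 := dvd_add h1 h2
      rw [sub_add_cancel, hTpval] at h3
      exact h3
    -- case analysis
    have hq2C₁x : q ∣ 2 ∨ q ∣ C₁ ∨ q ∣ x := by
      rcases hqI.dvd_mul.mp hqT with h | h
      · rcases hqI.dvd_mul.mp h with h' | h'
        · left; exact_mod_cast h'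
        · right; left; exact_mod_cast hqI.dvd_of_dvd_pow h'
      · right; right; exact_mod_cast h
    rcases hq2C₁x with h2 | hC₁q | hxq
    · -- q = 2 : contradiction with mod 8 condition
      have hq2 : q = 2 := by
        have := Nat.le_of_dvd (by norm_num) h2
        have := hq.two_le
        omega
      subst hq2
      have h2y : 2 ∣ y := hqy
      have hyp8 : 8 ∣ y ^ p := by
        obtain ⟨y', rfl⟩ := h2y
        calc (8:ℕ) = 2^3 := by norm_num
          _ ∣ 2^p := pow_dvd_pow 2 hp3'
          _ ∣ (2*y')^p := pow_dvd_pow_of_dvd (dvd_mul_right 2 y') p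
      have h2yp : 2 ∣ y ^ p := dvd_trans (by norm_num) hyp8
      have hA : ¬ (2 ∣ C₁ * x^2) := by
        intro h2A
        have hsum : 2 ∣ C₁ * x^2 + C₂ := by rw [heq]; exact h2yp
        have h2C₂ : 2 ∣ C₂ := (Nat.dvd_add_right h2A).mp hsum
        have : (2:ℕ) ∣ 1 := hgcd ▸ Nat.dvd_gcd (Nat.dvd_gcd h2A h2C₂) h2yp
        norm_num at this
      have hC₁odd : ¬ 2 ∣ C₁ := fun h => hA (h.mul_right _)
      have hxodd : ¬ 2 ∣ x := fun h => hA (Dvd.dvd.mul_left (dvd_pow h (by norm_num)) C₁)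
      obtain ⟨j, hj⟩ : ∃ j, x = 2*j+1 := ⟨x/2, by omega⟩
      obtain ⟨i, hi⟩ : ∃ i, C₁ = 2*i+1 := ⟨C₁/2, by omega⟩
      obtain ⟨w, hw⟩ : ∃ w, x^2 = 8*w+1 := by
        obtain ⟨w, hw⟩ := (Nat.even_mul_succ_self j)
        refine ⟨w, ?_⟩
        rw [hj]
        calc (2*j+1)^2 = 4*(j*(j+1))+1 := by ring
          _ = 8*w+1 := by rw [hw]; ring
      obtain ⟨v, hv⟩ : ∃ v, C₁*C₁ = 8*v+1 := by
        obtain ⟨v, hv⟩ := (Nat.even_mul_succ_self i)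
        refine ⟨v, ?_⟩
        rw [hi]
        calc (2*i+1)*(2*i+1) = 4*(i*(i+1))+1 := by ring
          _ = 8*v+1 := by rw [hv]; ring
      obtain ⟨t8, ht8⟩ := hyp8
      have h8' : 8 ∣ C₁ + C₂ := by
        have h := heq
        rw [show C₁ * x^2 = 8*(C₁*w) + C₁ from by rw [hw]; ring, ht8] at h
        omega
      obtain ⟨g, hg⟩ := h8'
      have e1 : C₁*C₁ + C₁*C₂ = 8*(C₁*g) := by
        calc C₁*C₁ + C₁*C₂ = C₁*(C₁+C₂) := by ring
          _ = C₁*(8*g) := by rw [hg]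
          _ = 8*(C₁*g) := by ring
      exact hmod8 (by omega)
    · -- q ∣ C₁
      have hqyp : q ∣ y^p := dvd_pow hqy (by omega)
      have hsum : q ∣ C₁ * x^2 + C₂ := by rw [heq]; exact hqyp
      have hqC₂ : q ∣ C₂ := (Nat.dvd_add_right (hC₁q.mul_right _)).mp hsum
      have : q ∣ 1 := hcop ▸ Nat.dvd_gcd hC₁q hqC₂
      exact hq.one_lt.ne' (Nat.dvd_one.mp this)
    · -- q ∣ x
      have hqA : q ∣ C₁ * x^2 := (dvd_pow hxq (by norm_num)).mul_left C₁
      have hqyp : q ∣ y^p := dvd_pow hqy (by omega)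
      have hsum : q ∣ C₁ * x^2 + C₂ := by rw [heq]; exact hqyp
      have hqC₂ : q ∣ C₂ := (Nat.dvd_add_right hqA).mp hsum
      have : q ∣ 1 := hgcd ▸ Nat.dvd_gcd (Nat.dvd_gcd hqA hqC₂) hqyp
      exact hq.one_lt.ne' (Nat.dvd_one.mp this)


  refine ⟨⟨(C₁:ℤ) * e^2, (y:ℤ), hsumsq, hprod, hcoprime⟩, ?_⟩
  rintro ⟨u, hu_int, -, huα⟩
  rw [hα, hβ] at huα
  have hδu : δ = u * (starRingEnd ℂ) δ := by
    field_simp at huα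
    exact huα
  have hδne : δ ≠ 0 := by
    intro h0
    rw [h0, zero_pow hp.ne_zero] at hδeq
    have h2 : ((C₁:ℂ)*x + (d:ℂ)*sqrtneg c) = 0 :=
      (mul_eq_zero.mp hδeq).resolve_left (pow_ne_zero k hC₁ℂ)
    have him := congrArg Complex.im h2
    simp [sqrtneg, Complex.add_im, Complex.mul_im] at him
    rcases him with h | h
    · exact hdpos.ne' h
    · exact hcpos.ne' h
  have hconjδne : (starRingEnd ℂ) δ ≠ 0 := by
    intro h0
    apply hδne
    have := congrArg (starRingEnd ℂ) h0
    simpa using this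
  have hune : u ≠ 0 := by
    intro h0
    rw [h0, zero_mul] at hδu
    exact hδne hδu
  have hcu : (starRingEnd ℂ) δ = (starRingEnd ℂ) u * δ := by
    have h := congrArg (starRingEnd ℂ) hδu
    simpa [map_mul] using h
  have h1u : u * (starRingEnd ℂ) u = 1 := by
    have h2 : (u * (starRingEnd ℂ) u - 1) * (starRingEnd ℂ) δ = 0 := by
      linear_combination (-(starRingEnd ℂ) u) * hδu - hcu
    rcases mul_eq_zero.mp h2 with h | h
    · exact sub_eq_zero.mp h
    · exact absurd h hconjδne
  have hconjδK : (starRingEnd ℂ) δ ∈ Kf c := by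
    have hsK : ((s:ℤ):ℂ) ∈ Kf c := intCast_mem (Kf c) s
    have hrepr : (starRingEnd ℂ) δ = ((s:ℤ):ℂ) - δ := by rw [hs]; ring
    rw [hrepr]
    exact sub_mem hsK hδK
  have huK : u ∈ Kf c := by
    have hrepr : u = δ * ((starRingEnd ℂ) δ)⁻¹ := by
      field_simp [hconjδne]
      linear_combination -hδu
    rw [hrepr]
    exact mul_mem hδK (inv_mem hconjδK)
  obtain ⟨a', b', hu_ab⟩ := Kf_mem huK
  have hconju : (starRingEnd ℂ) u = (a':ℂ) - (b':ℂ) * sqrtneg c := by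
    rw [hu_ab]
    simp [map_add, map_mul, hconj_sc]
    ring
  have htru : u + (starRingEnd ℂ) u = (((2*a' : ℚ)):ℂ) := by
    rw [hconju, hu_ab]; push_cast; ring
  obtain ⟨τ, hτval⟩ := rat_coe_int_of_integral (q := 2*a')
    (htru ▸ (hu_int.add (map_isIntegral_int (starRingEnd ℂ) hu_int)))
  have hτ : (τ:ℂ) = u + (starRingEnd ℂ) u := by
    rw [htru, ← hτval]; push_cast; ring
  -- bound on τ
  have hnsq : Complex.normSq u = 1 := by
    have h := Complex.mul_conj u
    rw [h1u] at h
    exact_mod_cast h.symm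
  have habs : ‖u‖ = 1 := by
    rw [Complex.norm_def, hnsq, Real.sqrt_one]
  have hre : (τ:ℝ) = 2 * u.re := by
    have h := Complex.add_conj u
    rw [← hτ] at h
    exact_mod_cast h
  have hrebound : |u.re| ≤ 1 := by
    have h := Complex.abs_re_le_norm u
    rwa [habs] at h
  have hτlb : (-2:ℤ) ≤ τ := by
    have : (-2:ℝ) ≤ (τ:ℝ) := by rw [hre]; nlinarith [abs_le.mp hrebound]
    exact_mod_cast this
  have hτub : τ ≤ 2 := by
    have : (τ:ℝ) ≤ 2 := by rw [hre]; nlinarith [abs_le.mp hrebound]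
    exact_mod_cast this
  -- quadratic
  have hu2 : u^2 = (τ:ℂ)*u - 1 := by linear_combination (-u)*hτ - h1u
  -- main equation
  have hEsplit : (C₁:ℂ)*x + d*sqrtneg c = u^p * ((C₁:ℂ)*x - d*sqrtneg c) := by
    have h1 : δ^p = u^p * ((starRingEnd ℂ) δ)^p := by
      conv_lhs => rw [hδu]
      rw [mul_pow]
    have h2 : (C₁:ℂ)^k * ((C₁:ℂ)*x + d*sqrtneg c)
        = (C₁:ℂ)^k * (u^p * ((C₁:ℂ)*x - d*sqrtneg c)) := by
      rw [hδeq, h1, ← hδeq']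
      ring
    exact mul_left_cancel₀ (pow_ne_zero k hC₁ℂ) h2
  set X : ℝ := (C₁:ℝ)*(x:ℝ) with hX
  set W : ℝ := (d:ℝ)*Real.sqrt c with hW
  have hXpos : 0 < X := mul_pos (by exact_mod_cast hC₁pos) (by exact_mod_cast hxpos)
  have hWpos : 0 < W := mul_pos (by exact_mod_cast hdpos) hsqc
  have hE : ((X:ℝ):ℂ) + ((W:ℝ):ℂ)*Complex.I = u^p * (((X:ℝ):ℂ) - ((W:ℝ):ℂ)*Complex.I) := by
    have e1 : ((X:ℝ):ℂ) = (C₁:ℂ)*(x:ℂ) := by rw [hX]; push_cast; ring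
    have e2 : ((W:ℝ):ℂ)*Complex.I = (d:ℂ)*sqrtneg c := by
      rw [hW, sqrtneg]; push_cast; ring
    rw [e1, e2]
    exact hEsplit
  have hW2 : W^2 = (c:ℝ)*(d:ℝ)^2 := by
    rw [hW, mul_pow, Real.sq_sqrt hcR.le]; ring
  -- key computation
  have keyof : ∀ v : ℂ, (((X:ℝ):ℂ) + ((W:ℝ):ℂ)*Complex.I = v * (((X:ℝ):ℂ) - ((W:ℝ):ℂ)*Complex.I))
      → v + (starRingEnd ℂ) v = (τ:ℂ) → (2 - (τ:ℝ))*X^2 = (2 + (τ:ℝ))*W^2 := by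
    intro v h1 h2
    have h1' : ((X:ℝ):ℂ) - ((W:ℝ):ℂ)*Complex.I
        = (starRingEnd ℂ) v * (((X:ℝ):ℂ) + ((W:ℝ):ℂ)*Complex.I) := by
      have h := congrArg (starRingEnd ℂ) h1
      simpa [map_mul, map_add, map_sub, Complex.conj_ofReal, Complex.conj_I, sub_eq_add_neg]
        using h
    have hC : ((2:ℂ) - (τ:ℂ))*((X:ℝ):ℂ)^2 = ((2:ℂ) + (τ:ℂ))*((W:ℝ):ℂ)^2 := by
      linear_combination (((X:ℝ):ℂ) + ((W:ℝ):ℂ)*Complex.I)*h1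
        + (((X:ℝ):ℂ) - ((W:ℝ):ℂ)*Complex.I)*h1'
        + (((X:ℝ):ℂ)^2 + ((W:ℝ):ℂ)^2)*h2
        + (-2*((W:ℝ):ℂ)^2 - ((W:ℝ):ℂ)^2*(v + (starRingEnd ℂ) v)) * Complex.I_sq
    exact_mod_cast hC
  -- final numeric contradiction helper
  have final : ∀ g r : ℕ, 0 < g → Nat.gcd (C₁*x^2) C₂ = g → y^p = r*g → 2 ≤ r → r ≤ 4 → False := by
    intro g r hgpos hg hyp hr2 hr4
    have hdvd : g ∣ y^p := hyp ▸ Dvd.intro_left r rfl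
    have hg1 : g = 1 := by
      have h := hgcd
      rw [hg] at h
      exact Nat.dvd_one.mp (h ▸ Nat.dvd_gcd dvd_rfl hdvd)
    rw [hg1, mul_one] at hyp
    rcases Nat.lt_or_ge y 2 with hy | hy
    · have hy1 : y = 1 := by omega
      rw [hy1, one_pow] at hyp
      omega
    · have h1 : 2^p ≤ y^p := Nat.pow_le_pow_left hy p
      have h2 : (8:ℕ) ≤ 2^p := by
        calc (8:ℕ) = 2^3 := by norm_num
          _ ≤ 2^p := Nat.pow_le_pow_right (by norm_num) hp3'
      omega
  -- convert real key equation into ℕ facts, generic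
  have natkey : ∀ A B : ℕ, (A:ℝ)*X^2 = (B:ℝ)*W^2 → A*(C₁*x)^2 = B*(c*d^2) := by
    intro A B h
    have hr : ((A*(C₁*x)^2 : ℕ):ℝ) = ((B*(c*d^2) : ℕ):ℝ) := by
      push_cast
      rw [hX] at h
      linear_combination h + (B:ℝ)*hW2
    exact_mod_cast hr
  obtain ⟨hτlb', hτub'⟩ := And.intro hτlb hτub
  interval_cases τ
  · -- τ = -2 : u = -1
    have hu : u = -1 := by
      have h0 : (u+1)^2 = 0 := by push_cast at hu2; linear_combination hu2
      have h1 : u + 1 = 0 := by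
        exact pow_eq_zero_iff (two_ne_zero) |>.mp h0
      linear_combination h1
    have hvτ : u^p + (starRingEnd ℂ) (u^p) = (((-2:ℤ)):ℂ) := by
      rw [hu, (show Odd p from ⟨k, by omega⟩).neg_one_pow]
      push_cast
      rw [map_neg, map_one]
      norm_num
    have hkey := keyof (u^p) hE hvτ
    push_cast at hkey
    nlinarith [hXpos, hkey]
  · -- τ = -1 : u^3 = 1
    have hu3 : u^3 = 1 := by
      push_cast at hu2
      linear_combination (u-1)*hu2
    by_cases hp3c : p = 3
    · have hE3 := hE
      rw [hp3c, hu3, one_mul] at hE3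
      have hWc : ((W:ℝ):ℂ) * Complex.I = 0 := by linear_combination (1/2 : ℂ) * hE3
      rcases mul_eq_zero.mp hWc with h | h
      · have : W = 0 := by exact_mod_cast h
        linarith
      · exact Complex.I_ne_zero h
    · have hu6 : u^6 = 1 := by
        have h : u^6 = (u^3)^2 := by ring
        rw [h, hu3, one_pow]
      have hmod6 : p % 6 = 1 ∨ p % 6 = 5 := by
        have h3 : ¬ (3 ∣ p) := by
          intro h
          rcases (Nat.Prime.eq_one_or_self_of_dvd hp 3 h) with h' | h'
          · norm_num at h'
          · exact hp3c h'.symm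
        omega
      have hup : u^p = u^(p % 6) := by
        conv_lhs => rw [← Nat.div_add_mod p 6]
        rw [pow_add, pow_mul, hu6, one_pow, one_mul]
      have hvτ : u^p + (starRingEnd ℂ) (u^p) = (((-1:ℤ)):ℂ) := by
        rcases hmod6 with h | h
        · rw [hup, h, pow_one, ← hτ]
        · have hu5 : u^5 = (starRingEnd ℂ) u := by
            have e : u^5 * u = (starRingEnd ℂ) u * u := by
              calc u^5*u = u^6 := by ring
                _ = 1 := hu6
                _ = (starRingEnd ℂ) u * u := by rw [mul_comm]; exact h1u.symm
            exact mul_right_cancel₀ hune e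
          rw [hup, h, hu5, Complex.conj_conj]
          linear_combination -hτ
      have hkey := keyof (u^p) hE hvτ
      push_cast at hkey
      have hkey' : (3:ℝ)*X^2 = (1:ℕ)*W^2 := by push_cast; linarith
      have hnat := natkey 3 1 (by push_cast; linarith)
      -- 3*(C₁*x)^2 = c*d^2  ⇒  C₂ = 3*(C₁*x^2)
      have hC₂eq : C₂ = 3*(C₁*x^2) := by
        have h2 : C₁ * C₂ = C₁ * (3*(C₁*x^2)) := by
          rw [hfact]
          have : 3*(C₁*x)^2 = 1*(c*d^2) := hnat
          nlinarith [this]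
        exact Nat.eq_of_mul_eq_mul_left hC₁pos h2
      apply final (C₁*x^2) 4
      · positivity
      · rw [hC₂eq]
        exact Nat.gcd_eq_left (dvd_mul_left _ 3)
      · rw [← heq, hC₂eq]; ring
      · norm_num
      · norm_num
  · -- τ = 0 : u^2 = -1
    have hu2' : u^2 = -1 := by
      push_cast at hu2
      linear_combination hu2
    have hup : u^p = (-1:ℂ)^k * u := by
      rw [hk, pow_succ, pow_mul, hu2']
    have hvτ : u^p + (starRingEnd ℂ) (u^p) = (((0:ℤ)):ℂ) := by
      rw [hup]
      have hconjpow : (starRingEnd ℂ) ((-1:ℂ)^k * u) = (-1:ℂ)^k * (starRingEnd ℂ) u := by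
        simp [map_mul, map_pow]
      rw [hconjpow]
      have h0 : u + (starRingEnd ℂ) u = 0 := by
        rw [← hτ]; push_cast; ring
      push_cast
      linear_combination ((-1:ℂ)^k) * h0
    have hkey := keyof (u^p) hE hvτ
    push_cast at hkey
    have hnat := natkey 1 1 (by push_cast; linarith)
    have hC₂eq : C₂ = C₁*x^2 := by
      have h2 : C₁ * C₂ = C₁ * (C₁*x^2) := by
        rw [hfact]
        nlinarith [hnat]
      exact (Nat.eq_of_mul_eq_mul_left hC₁pos h2)
    apply final (C₁*x^2) 2
    · positivity
    · rw [hC₂eq]; exact Nat.gcd_self _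
    · rw [← heq, hC₂eq]; ring
    · norm_num
    · norm_num
  · -- τ = 1 : u^3 = -1
    have hu3 : u^3 = -1 := by
      push_cast at hu2
      linear_combination (u+1)*hu2
    by_cases hp3c : p = 3
    · have hE3 := hE
      rw [hp3c, hu3] at hE3
      have hXc : ((X:ℝ):ℂ) = 0 := by linear_combination (1/2 : ℂ) * hE3
      have : X = 0 := by exact_mod_cast hXc
      linarith
    · have hu6 : u^6 = 1 := by
        have h : u^6 = (u^3)^2 := by ring
        rw [h, hu3]; norm_num
      have hmod6 : p % 6 = 1 ∨ p % 6 = 5 := by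
        have h3 : ¬ (3 ∣ p) := by
          intro h
          rcases (Nat.Prime.eq_one_or_self_of_dvd hp 3 h) with h' | h'
          · norm_num at h'
          · exact hp3c h'.symm
        omega
      have hup : u^p = u^(p % 6) := by
        conv_lhs => rw [← Nat.div_add_mod p 6]
        rw [pow_add, pow_mul, hu6, one_pow, one_mul]
      have hvτ : u^p + (starRingEnd ℂ) (u^p) = (((1:ℤ)):ℂ) := by
        rcases hmod6 with h | h
        · rw [hup, h, pow_one, ← hτ]
        · have hu5 : u^5 = (starRingEnd ℂ) u := by
            have e : u^5 * u = (starRingEnd ℂ) u * u := by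
              calc u^5*u = u^6 := by ring
                _ = 1 := hu6
                _ = (starRingEnd ℂ) u * u := by rw [mul_comm]; exact h1u.symm
            exact mul_right_cancel₀ hune e
          rw [hup, h, hu5, Complex.conj_conj]
          linear_combination -hτ
      have hkey := keyof (u^p) hE hvτ
      push_cast at hkey
      have hnat := natkey 1 3 (by push_cast; linarith)
      have hC₂eq : C₁*x^2 = 3*C₂ := by
        have h2 : C₁ * (C₁*x^2) = C₁ * (3*C₂) := by
          rw [show C₁*(3*C₂) = 3*(C₁*C₂) by ring, hfact]
          nlinarith [hnat]
        exact Nat.eq_of_mul_eq_mul_left hC₁pos h2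
      apply final C₂ 4
      · exact hC₂pos
      · rw [hC₂eq]
        exact Nat.gcd_eq_right (dvd_mul_left _ 3)
      · rw [← heq, hC₂eq]; ring
      · norm_num
      · norm_num
  · -- τ = 2 : u = 1
    have hu : u = 1 := by
      have h0 : (u-1)^2 = 0 := by push_cast at hu2; linear_combination hu2
      have h1 : u - 1 = 0 := pow_eq_zero_iff (two_ne_zero) |>.mp h0
      linear_combination h1
    have hvτ : u^p + (starRingEnd ℂ) (u^p) = (((2:ℤ)):ℂ) := by
      rw [hu, one_pow]
      push_cast
      rw [map_one]
      norm_num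
    have hkey := keyof (u^p) hE hvτ
    push_cast at hkey
    nlinarith [hWpos, hkey]
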